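/- Let H be a real inner product space, A ⊆ H a nonempty bounded set, B := A ∪ (−A), and f : H → ℝ differentiable at x* ∈ H. If the Matching Pursuit gap vanishes at x*, i.e. sup_{s ∈ B} ⟨∇f(x*), s⟩ = 0, then ⟨∇f(x*), x − x*⟩ = 0 for every x ∈ H with x − x* in the linear span of A; in particular x* is a stationary point of f over the linear span of A. -/
import Mathlib


open scoped RealInnerProductSpace

/-- If the Matching Pursuit gap `sup_{s ∈ B} ⟨∇f(x*), s⟩` vanishes at `x*`, where
`B = A ∪ (−A)`, then `⟨∇f(x*), x − x*⟩ = 0` for every `x` with `x − x*` in the linear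
span of `A`; i.e. `x*` is stationary for `f` over the linear span of `A`. -/
theorem stmt_19 {H : Type*} [NormedAddCommGroup H] [InnerProductSpace ℝ H]
    (A : Set H) (hA : A.Nonempty) (hAb : Bornology.IsBounded A)
    (f : H → ℝ) (xstar gradf : H) (hgrad : HasFDerivAt f ((innerSL ℝ) gradf) xstar)
    (hgap : sSup ((fun s => ⟪gradf, s⟫) '' (A ∪ -A)) = 0) :
    ∀ x : H, x - xstar ∈ Submodule.span ℝ A → ⟪gradf, x - xstar⟫ = 0 := by
  obtain ⟨C, hC⟩ := hAb.subset_closedBall 0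
  have hbdd : BddAbove ((fun s => ⟪gradf, s⟫) '' (A ∪ -A)) := by
    refine ⟨‖gradf‖ * C, ?_⟩
    rintro _ ⟨s, hs, rfl⟩
    have hsn : ‖s‖ ≤ C := by
      rcases hs with hs | hs
      · simpa using mem_closedBall_zero_iff.mp (hC hs)
      · have := mem_closedBall_zero_iff.mp (hC (Set.neg_mem_neg.mpr hs))
        simpa using this
    calc ⟪gradf, s⟫ ≤ ‖gradf‖ * ‖s‖ := real_inner_le_norm _ _
      _ ≤ ‖gradf‖ * C := by
        exact mul_le_mul_of_nonneg_left hsn (norm_nonneg _)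
  have hle : ∀ s ∈ A ∪ -A, ⟪gradf, s⟫ ≤ 0 := fun s hs => by
    have := le_csSup hbdd (Set.mem_image_of_mem _ hs)
    simpa [hgap] using this
  have hzero : ∀ s ∈ A, ⟪gradf, s⟫ = 0 := fun s hs => by
    have h1 := hle s (Or.inl hs)
    have h2 := hle (-s) (Or.inr (by simpa using hs))
    rw [inner_neg_right] at h2
    linarith
  intro x hx
  generalize x - xstar = y at hx ⊢
  induction hx using Submodule.span_induction with
  | mem s hs => exact hzero s hs
  | zero => simp
  | add y z _ _ hy hz => rw [inner_add_right, hy, hz]; ring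
  | smul a y _ hy => rw [real_inner_smul_right, hy]; ring
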